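/- arXiv:2009.01286 — 2 statements merged into one kernel-verified Lean document; each statement's English description precedes it below -/
import Mathlib

section
/- If G is a nut graph and uv is an edge of G with kernel eigenvector values a at u and b at v, then the vector obtained by assigning values b, −a, −b, a to the four subdivision vertices w, x, y, z of the path u–w–x–y–z–v in S(G,uv), while keeping all other values from G, is a kernel vector of the adjacency matrix of S(G,uv) with no zero entries. -/
open Matrix

attribute [local instance] Classical.propDecidable

/-- A nut graph: a connected simple graph whose adjacency matrix has a
one-dimensional kernel spanned by a vector with all entries nonzero. -/
def IsNutGraph {V : Type*} [Fintype V] (G : SimpleGraph V) : Prop :=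
  G.Connected ∧ ∃ x : V → ℝ,
    G.adjMatrix ℝ *ᵥ x = 0 ∧ (∀ v, x v ≠ 0) ∧
    ∀ y : V → ℝ, G.adjMatrix ℝ *ᵥ y = 0 → ∃ c : ℝ, y = c • x

/-- The subdivision construction `S(G, uv)`: replace edge `uv` by a path
`u–w–x–y–z–v` through four new vertices `w = inr 0`, `x = inr 1`,
`y = inr 2`, `z = inr 3`. -/
def subdivExt {V : Type*} (G : SimpleGraph V) (u v : V) : SimpleGraph (V ⊕ Fin 4) where
  Adj a b := match a, b with
    | Sum.inl a, Sum.inl b => G.Adj a b ∧ ¬(a = u ∧ b = v) ∧ ¬(a = v ∧ b = u)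
    | Sum.inl a, Sum.inr i => (a = u ∧ i = 0) ∨ (a = v ∧ i = 3)
    | Sum.inr i, Sum.inl a => (a = u ∧ i = 0) ∨ (a = v ∧ i = 3)
    | Sum.inr i, Sum.inr j => i.val + 1 = j.val ∨ j.val + 1 = i.val
  symm := by
    constructor
    rintro (a | i) (b | j) h
    · exact ⟨h.1.symm, fun hc => h.2.2 ⟨hc.2, hc.1⟩, fun hc => h.2.1 ⟨hc.2, hc.1⟩⟩
    · exact h
    · exact h
    · exact h.symm
  loopless := by
    constructor
    rintro (a | i) h
    · exact G.loopless.irrefl a h.1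
    · omega

/-- If `G` is a nut graph with kernel eigenvector `x`, taking values `a` at `u`
and `b` at `v` on an edge `uv`, then assigning `b, −a, −b, a` to the four
subdivision vertices `w, x, y, z` of `S(G,uv)` and keeping all other values
gives a kernel vector of the adjacency matrix of `S(G,uv)` with no zero
entries. -/
theorem subdivExt_kernel_vector {V : Type*} [Fintype V] (G : SimpleGraph V)
    (u v : V) (huv : G.Adj u v) (hG : IsNutGraph G) (x : V → ℝ)
    (hker : G.adjMatrix ℝ *ᵥ x = 0) (hnz : ∀ w, x w ≠ 0) :
    ((subdivExt G u v).adjMatrix ℝ *ᵥ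
        (Sum.elim x (![x v, -x u, -x v, x u]))) = 0 ∧
      ∀ w : V ⊕ Fin 4, Sum.elim x (![x v, -x u, -x v, x u]) w ≠ 0 := by
  have hne : u ≠ v := huv.ne
  have horig : ∀ a : V, ∑ b, (if G.Adj a b then (1:ℝ) else 0) * x b = 0 := by
    intro a
    have h := congrFun hker a
    simpa [Matrix.mulVec, dotProduct, SimpleGraph.adjMatrix_apply] using h
  constructor
  · funext w
    cases w with
    | inr i =>
      fin_cases i <;>
        · simp [Matrix.mulVec, dotProduct, Fintype.sum_sum_type,
            SimpleGraph.adjMatrix_apply, subdivExt, Fin.sum_univ_four, hne, hne.symm,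
            ite_mul, Finset.sum_ite_eq',
            show ((0:Fin 4):ℕ) = 0 from rfl, show ((1:Fin 4):ℕ) = 1 from rfl,
            show ((2:Fin 4):ℕ) = 2 from rfl, show ((3:Fin 4):ℕ) = 3 from rfl]
          try ring
    | inl a =>
      simp only [Matrix.mulVec, dotProduct, Fintype.sum_sum_type, Pi.zero_apply,
        SimpleGraph.adjMatrix_apply, Sum.elim_inl, Sum.elim_inr]
      by_cases hau : a = u
      · have hav : a ≠ v := hau ▸ hne
        have h1 : ∀ b, (if (subdivExt G u v).Adj (Sum.inl a) (Sum.inl b) then (1:ℝ) else 0) * x b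
            = (if G.Adj a b then (1:ℝ) else 0) * x b - (if b = v then x b else 0) := by
          intro b
          by_cases hbv : b = v
          · subst hbv; simp [subdivExt, hau, huv]
          · simp [subdivExt, hbv, hav]
        rw [Finset.sum_congr rfl (fun b _ => h1 b), Finset.sum_sub_distrib,
          horig a, Finset.sum_ite_eq' Finset.univ v x]
        simp [subdivExt, Fin.sum_univ_four, hau, hav, hne, hne.symm]
      · by_cases hav : a = v
        · have hau' : a ≠ u := hav ▸ hne.symm
          have h1 : ∀ b, (if (subdivExt G u v).Adj (Sum.inl a) (Sum.inl b) then (1:ℝ) else 0) * x b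
              = (if G.Adj a b then (1:ℝ) else 0) * x b - (if b = u then x b else 0) := by
            intro b
            by_cases hbu : b = u
            · subst hbu; simp [subdivExt, hav, huv.symm, hne]
            · simp [subdivExt, hbu, hau']
          rw [Finset.sum_congr rfl (fun b _ => h1 b), Finset.sum_sub_distrib,
            horig a, Finset.sum_ite_eq' Finset.univ u x]
          simp [subdivExt, Fin.sum_univ_four, hau, hav, hne, hne.symm]
        · have h1 : ∀ b, (if (subdivExt G u v).Adj (Sum.inl a) (Sum.inl b) then (1:ℝ) else 0) * x b
              = (if G.Adj a b then (1:ℝ) else 0) * x b := by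
            intro b
            simp [subdivExt, hau, hav]
          rw [Finset.sum_congr rfl (fun b _ => h1 b), horig a]
          simp [subdivExt, Fin.sum_univ_four, hau, hav, hne, hne.symm]
  · rintro (a | i)
    · exact hnz a
    · fin_cases i <;> simp [hnz u, hnz v]
end

section
/- Let G be a graph with a bridge uv, so that G − uv has two components G_1 ∋ u and G_2 ∋ v. If x is a kernel vector of the adjacency matrix of G, then the vector on B(G,uv) defined by negating x on G_1 (including u), keeping x on G_2 (including v), and assigning −x(v) to the new vertex adjacent to u and x(u) to the new vertex adjacent to v, is a kernel vector of the adjacency matrix of B(G,uv). -/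
open Matrix

attribute [local instance] Classical.propDecidable

/-- The bridge construction `B(G, uv)`: insert two new vertices `x = inr 0` and
`y = inr 1` on the edge `uv`, replacing it by the path `u–x–y–v`. -/
def bridgeExt {V : Type*} (G : SimpleGraph V) (u v : V) : SimpleGraph (V ⊕ Fin 2) where
  Adj a b := match a, b with
    | Sum.inl a, Sum.inl b => G.Adj a b ∧ ¬(a = u ∧ b = v) ∧ ¬(a = v ∧ b = u)
    | Sum.inl a, Sum.inr i => (a = u ∧ i = 0) ∨ (a = v ∧ i = 1)
    | Sum.inr i, Sum.inl a => (a = u ∧ i = 0) ∨ (a = v ∧ i = 1)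
    | Sum.inr i, Sum.inr j => i ≠ j
  symm := by
    constructor
    rintro (a | i) (b | j) h
    · exact ⟨h.1.symm, fun hc => h.2.2 ⟨hc.2, hc.1⟩, fun hc => h.2.1 ⟨hc.2, hc.1⟩⟩
    · exact h
    · exact h
    · exact h.symm
  loopless := by
    constructor
    rintro (a | i) h
    · exact G.ne_of_adj h.1 rfl
    · exact h rfl

/-- If `uv` is a bridge of `G` and `x` is a kernel vector of the adjacency
matrix of `G`, then the vector on `B(G,uv)` obtained by negating `x` on the
component of `u` in `G − uv`, keeping `x` on the component of `v`, and
assigning `−x v` to the new vertex adjacent to `u` and `x u` to the new vertex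
adjacent to `v`, is a kernel vector of the adjacency matrix of `B(G,uv)`. -/
theorem bridgeExt_kernel_vector {V : Type*} [Fintype V] (G : SimpleGraph V)
    (u v : V) (huv : G.Adj u v) (hbridge : G.IsBridge s(u, v))
    (x : V → ℝ) (hker : G.adjMatrix ℝ *ᵥ x = 0) :
    (bridgeExt G u v).adjMatrix ℝ *ᵥ
      (Sum.elim
        (fun a => if (G.deleteEdges {s(u, v)}).Reachable u a then -x a else x a)
        (![-x v, x u])) = 0 := by
  classical
  have hne : u ≠ v := huv.ne
  set G' := G.deleteEdges {s(u, v)} with hG'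
  have hRu : G'.Reachable u u := SimpleGraph.Reachable.refl u
  have hRv : ¬ G'.Reachable u v := by
    rw [SimpleGraph.isBridge_iff] at hbridge
    rw [hG', SimpleGraph.deleteEdges]
    exact hbridge
  have hker' : ∀ a, ∑ b : V, (if G.Adj a b then x b else 0) = 0 := by
    intro a
    have := congrFun hker a
    simpa [Matrix.mulVec, dotProduct, SimpleGraph.adjMatrix_apply, ite_mul] using this
  have htrans : ∀ a b : V, G.Adj a b → s(a, b) ≠ s(u, v) →
      (G'.Reachable u a ↔ G'.Reachable u b) := by
    intro a b hab hmem
    have hadj : G'.Adj a b := by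
      rw [hG', SimpleGraph.deleteEdges_adj]
      simpa [hmem] using hab
    exact ⟨fun h => h.trans hadj.reachable, fun h => h.trans hadj.symm.reachable⟩
  funext w
  rw [Pi.zero_apply, Matrix.mulVec, dotProduct]
  simp only [SimpleGraph.adjMatrix_apply, ite_mul, one_mul, zero_mul, Fintype.sum_sum_type]
  cases w with
  | inr i =>
    fin_cases i
    · simp [bridgeExt, Fin.sum_univ_two, hRu, hne, Finset.sum_ite_eq']
    · simp [bridgeExt, Fin.sum_univ_two, hRv, hne.symm, Finset.sum_ite_eq']
      rw [if_neg hRv]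
      ring
  | inl a =>
    by_cases hau : a = u
    · subst hau
      simp only [bridgeExt, Fin.sum_univ_two, hne, Sum.elim_inl, Sum.elim_inr,
        true_and, false_and, and_true, and_false, not_false_iff, or_false, false_or, if_true,
        Matrix.cons_val_zero, Matrix.cons_val_one, Matrix.head_cons,
        (by decide : ¬ (0:Fin 2) = 1), (by decide : ¬ (1:Fin 2) = 0), if_false, not_true, iff_false]
      have e1 : ∀ b : V, (if G.Adj a b ∧ ¬ b = v then
            (if G'.Reachable a b then -x b else x b) else 0)
          = -(if G.Adj a b then x b else 0) + (if b = v then x v else 0) := by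
        intro b
        by_cases hb : b = v
        · subst hb
          simp [huv, hne]
        · by_cases hadj : G.Adj a b
          · have hR : G'.Reachable a b := (htrans a b hadj (by
              rw [Ne, Sym2.eq_iff]
              push_neg
              exact ⟨fun _ => hb, fun h => absurd h hne⟩)).mp hRu
            simp [hadj, hb, hR]
          · simp [hadj, hb]
      rw [Finset.sum_congr rfl fun b _ => e1 b, Finset.sum_add_distrib,
        Finset.sum_neg_distrib, hker' a, Finset.sum_ite_eq' Finset.univ v]
      simp
    · by_cases hav : a = v
      · subst hav
        simp only [bridgeExt, Fin.sum_univ_two, hne, Sum.elim_inl, Sum.elim_inr,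
          true_and, false_and, and_true, and_false, not_false_iff, or_false, false_or, if_true,
          Matrix.cons_val_zero, Matrix.cons_val_one, Matrix.head_cons, hau, if_false, not_true,
          (by decide : ¬ (0:Fin 2) = 1), (by decide : ¬ (1:Fin 2) = 0), iff_false]
        have e1 : ∀ b : V, (if G.Adj a b ∧ ¬ b = u then
              (if G'.Reachable u b then -x b else x b) else 0)
            = (if G.Adj a b then x b else 0) - (if b = u then x u else 0) := by
          intro b
          by_cases hb : b = u
          · subst hb
            simp [huv.symm]
          · by_cases hadj : G.Adj a b
            · have hR : ¬ G'.Reachable u b := fun h =>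
                hRv ((htrans a b hadj (by
                  rw [Ne, Sym2.eq_iff]
                  push_neg
                  exact ⟨fun h' => absurd h' hau, fun _ => hb⟩)).mpr h)
              simp [hadj, hb, hR]
            · simp [hadj, hb]
        rw [Finset.sum_congr rfl fun b _ => e1 b, Finset.sum_sub_distrib,
          hker' a, Finset.sum_ite_eq' Finset.univ u]
        simp
      · simp only [bridgeExt, Fin.sum_univ_two, hne, Sum.elim_inl, Sum.elim_inr,
          true_and, false_and, and_true, and_false, not_false_iff, or_false, false_or, if_true,
          Matrix.cons_val_zero, Matrix.cons_val_one, Matrix.head_cons, hau, hav, if_false, not_true,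
          (by decide : ¬ (0:Fin 2) = 1), (by decide : ¬ (1:Fin 2) = 0), iff_false]
        have e1 : ∀ b : V, (if G.Adj a b then
              (if G'.Reachable u b then -x b else x b) else 0)
            = (if G'.Reachable u a then (-1 : ℝ) else 1) * (if G.Adj a b then x b else 0) := by
          intro b
          by_cases hadj : G.Adj a b
          · have hR : G'.Reachable u b ↔ G'.Reachable u a := (htrans a b hadj (by
              rw [Ne, Sym2.eq_iff]
              push_neg
              exact ⟨fun h' => absurd h' hau, fun h' => absurd h' hav⟩)).symm
            by_cases hRa : G'.Reachable u a
            · simp [hadj, hR, hRa]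
            · simp [hadj, hR, hRa]
          · simp [hadj]
        rw [Finset.sum_congr rfl fun b _ => e1 b, ← Finset.mul_sum, hker' a, mul_zero]
        simp
end
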